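/- Player II has a winning strategy in the Laflamme game L(WT), where in round n Player I plays A_n ∈ WT and Player II responds with a finite set s_n ⊆ (ω×ω) \ A_n, Player II winning if ⋃ s_n ∈ WT^+. Consequently WT is strictly below fin×fin in the Katětov order. -/

import Mathlib

/-- fin×fin transferred to ω via the pairing function: `A` belongs to this
ideal iff all but finitely many of the sections `{m | pair k m ∈ A}` are
finite. This is the fixed copy of fin×fin used on each column. -/
def finTimesFinCoded : Set (Set ℕ) :=
  {A | {k : ℕ | {m : ℕ | Nat.pair k m ∈ A}.Infinite}.Finite}

/-- The ideal `WT` on ω×ω: `A ∈ WT` iff every column section of `A` belongs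
to the fixed copy of fin×fin, and all but finitely many column sections of
`A` are finite. -/
def WT : Set (Set (ℕ × ℕ)) :=
  {A | (∀ n : ℕ, {m : ℕ | (n, m) ∈ A} ∈ finTimesFinCoded) ∧
       {n : ℕ | {m : ℕ | (n, m) ∈ A}.Infinite}.Finite}

/-- The ideal fin×fin on ω×ω. -/
def finTimesFin : Set (Set (ℕ × ℕ)) :=
  {A | {n : ℕ | {m : ℕ | (n, m) ∈ A}.Infinite}.Finite}

def KatetovLE {α β : Type*} (I : Set (Set α)) (J : Set (Set β)) : Prop :=
  ∃ f : β → α, ∀ A ∈ I, f ⁻¹' A ∈ J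

/-- Every member of `WT` misses a point above any bound in every column. -/
lemma WT.exists_escape {A : Set (ℕ × ℕ)} (hA : A ∈ WT) (k n : ℕ) :
    ∃ m, n ≤ m ∧ (k, m) ∉ A := by
  have h1 : {j : ℕ | {m : ℕ | Nat.pair j m ∈ {m : ℕ | (k, m) ∈ A}}.Infinite}.Finite := hA.1 k
  obtain ⟨j, hj⟩ : ∃ j, j ∉ {j : ℕ | {m : ℕ | Nat.pair j m ∈ {m : ℕ | (k, m) ∈ A}}.Infinite} :=
    (h1.infinite_compl).nonempty
  have hfin : {m : ℕ | (k, Nat.pair j m) ∈ A}.Finite := Set.not_infinite.mp hj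
  obtain ⟨m, hm, hnm⟩ := hfin.infinite_compl.exists_gt n
  exact ⟨Nat.pair j m, le_trans (le_of_lt hnm) (Nat.right_le_pair j m), hm⟩

open Classical in
/-- Player II's choice function: a point above `n` in column `k` avoiding `A`. -/
noncomputable def pickM (k n : ℕ) (A : Set (ℕ × ℕ)) : ℕ :=
  if h : ∃ m, n ≤ m ∧ (k, m) ∉ A then h.choose else 0

lemma pickM_spec {A : Set (ℕ × ℕ)} (hA : A ∈ WT) (k n : ℕ) :
    n ≤ pickM k n A ∧ (k, pickM k n A) ∉ A := by
  have h := WT.exists_escape hA k n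
  rw [pickM, dif_pos h]
  exact h.choose_spec

/-- Player II's strategy in `L(WT)`. -/
noncomputable def wtStrat (L : List (Set (ℕ × ℕ))) : Set (ℕ × ℕ) :=
  {p | p.1 < L.length ∧ p.2 = pickM p.1 (L.length - 1) (L.getLastD ∅)}

lemma wtStrat_eq (A : ℕ → Set (ℕ × ℕ)) (n : ℕ) :
    wtStrat ((List.range (n + 1)).map A)
      = {p : ℕ × ℕ | p.1 ≤ n ∧ p.2 = pickM p.1 n (A n)} := by
  have hlen : ((List.range (n + 1)).map A).length = n + 1 := by simp
  have hlast : ((List.range (n + 1)).map A).getLastD ∅ = A n := by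
    rw [List.range_succ, List.map_append]
    simp
  ext p
  simp only [wtStrat, Set.mem_setOf_eq, hlen, hlast, Nat.add_sub_cancel, Nat.lt_succ_iff]

lemma WT.mono {A B : Set (ℕ × ℕ)} (h : A ⊆ B) (hB : B ∈ WT) : A ∈ WT := by
  constructor
  · intro n
    refine (hB.1 n).subset ?_
    intro k hk
    exact hk.mono (fun m hm => h hm)
  · refine hB.2.subset ?_
    intro n hn
    exact hn.mono (fun m hm => h hm)

lemma wt_winning :
    ∀ A : ℕ → Set (ℕ × ℕ), (∀ n, A n ∈ WT) →
      (∀ n, (wtStrat ((List.range (n + 1)).map A)).Finite ∧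
            wtStrat ((List.range (n + 1)).map A) ∩ A n = ∅) ∧
      (⋃ n, wtStrat ((List.range (n + 1)).map A)) ∉ WT := by
  intro A hA
  constructor
  · intro n
    rw [wtStrat_eq]
    constructor
    · have : {p : ℕ × ℕ | p.1 ≤ n ∧ p.2 = pickM p.1 n (A n)}
          ⊆ (fun k => (k, pickM k n (A n))) '' Set.Iic n := by
        rintro ⟨a, b⟩ ⟨h1, h2⟩
        exact ⟨a, h1, by simp [h2.symm]⟩
      exact Set.Finite.subset ((Set.finite_Iic n).image _) this
    · ext p
      simp only [Set.mem_inter_iff, Set.mem_setOf_eq, Set.mem_empty_iff_false, iff_false,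
        not_and]
      rintro ⟨h1, h2⟩ hp
      have := (pickM_spec (hA n) p.1 n).2
      rw [← h2] at this
      exact this (by simpa using hp)
  · intro hX
    have hinf : ∀ j : ℕ, {m : ℕ | (j, m) ∈ ⋃ n, wtStrat ((List.range (n + 1)).map A)}.Infinite := by
      intro j
      apply Set.infinite_of_forall_exists_gt
      intro N
      set n := max j (N + 1) with hn
      refine ⟨pickM j n (A n), ?_, ?_⟩
      · refine Set.mem_iUnion.mpr ⟨n, ?_⟩
        rw [wtStrat_eq]
        exact ⟨le_max_left _ _, rfl⟩
      · have h1 : N + 1 ≤ n := le_max_right _ _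
        have h2 := (pickM_spec (hA n) j n).1
        omega
    have : {n : ℕ | {m : ℕ | (n, m) ∈ ⋃ k, wtStrat ((List.range (k + 1)).map A)}.Infinite}
        = Set.univ := Set.eq_univ_of_forall hinf
    have h2 := hX.2
    rw [this] at h2
    exact Set.infinite_univ h2

/-- Player II has a winning strategy in the Laflamme game `L(WT)` (at round
`n` Player I plays `A n ∈ WT` and Player II, following the strategy `σ`
applied to the history `A 0, …, A n`, answers with a finite set disjoint from
`A n`; II wins if the union of her moves is `WT`-positive).  Consequently
`WT` is strictly below fin×fin in the Katětov order. -/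
theorem playerII_wins_WT_and_WT_strictly_below_finTimesFin :
    (∃ σ : List (Set (ℕ × ℕ)) → Set (ℕ × ℕ),
      ∀ A : ℕ → Set (ℕ × ℕ), (∀ n, A n ∈ WT) →
        (∀ n, (σ ((List.range (n + 1)).map A)).Finite ∧
              σ ((List.range (n + 1)).map A) ∩ A n = ∅) ∧
        (⋃ n, σ ((List.range (n + 1)).map A)) ∉ WT) ∧
    KatetovLE WT finTimesFin ∧ ¬ KatetovLE finTimesFin WT := by
  refine ⟨⟨wtStrat, wt_winning⟩, ⟨id, fun A hA => by simpa [finTimesFin] using hA.2⟩, ?_⟩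
  rintro ⟨f, hf⟩
  -- Player I counters with `A n = f ⁻¹' {p | p.1 ≤ n}`.
  set A : ℕ → Set (ℕ × ℕ) := fun n => f ⁻¹' {p : ℕ × ℕ | p.1 ≤ n} with hAdef
  have hE : ∀ n : ℕ, {p : ℕ × ℕ | p.1 ≤ n} ∈ finTimesFin := by
    intro n
    refine Set.Finite.subset (Set.finite_Iic n) ?_
    intro j hj
    by_contra hle
    simp only [Set.mem_Iic, not_le] at hle
    refine hj ?_
    have : {m : ℕ | (j, m) ∈ {p : ℕ × ℕ | p.1 ≤ n}} = ∅ := by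
      ext m; simp; omega
    rw [this]
    exact Set.finite_empty
  have hAWT : ∀ n, A n ∈ WT := fun n => hf _ (hE n)
  obtain ⟨hmoves, hpos⟩ := wt_winning A hAWT
  apply hpos
  -- the union is contained in the `f`-preimage of its image, which is in fin×fin
  set X : Set (ℕ × ℕ) := ⋃ n, wtStrat ((List.range (n + 1)).map A) with hXdef
  have hT : f '' X ∈ finTimesFin := by
    -- every column of `f '' X` is finite
    have hcol : ∀ j : ℕ, {m : ℕ | (j, m) ∈ f '' X}.Finite := by
      intro j
      have hsub : {m : ℕ | (j, m) ∈ f '' X}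
          ⊆ ⋃ n ∈ Set.Iio j, {m : ℕ | (j, m) ∈ f '' wtStrat ((List.range (n + 1)).map A)} := by
        intro m hm
        obtain ⟨p, hp, hfp⟩ := hm
        obtain ⟨n, hn⟩ := Set.mem_iUnion.mp hp
        have hdisj := (hmoves n).2
        have hnotin : p ∉ A n := by
          intro hpA
          have : p ∈ wtStrat ((List.range (n + 1)).map A) ∩ A n := ⟨hn, hpA⟩
          rw [hdisj] at this
          exact this
        have hfp1 : n < (f p).1 := by
          simp only [hAdef, Set.mem_preimage, Set.mem_setOf_eq, not_le] at hnotin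
          exact hnotin
        rw [hfp] at hfp1
        exact Set.mem_biUnion (show n ∈ Set.Iio j from hfp1) ⟨p, hn, hfp⟩
      refine Set.Finite.subset ?_ hsub
      refine Set.Finite.biUnion (Set.finite_Iio j) ?_
      intro n _
      have hfin : (f '' wtStrat ((List.range (n + 1)).map A)).Finite :=
        ((hmoves n).1).image f
      have : {m : ℕ | (j, m) ∈ f '' wtStrat ((List.range (n + 1)).map A)}
          = (fun m => (j, m)) ⁻¹' (f '' wtStrat ((List.range (n + 1)).map A)) := rfl
      rw [this]
      exact Set.Finite.preimage (Set.injOn_of_injective (fun a b h => by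
        simpa using congrArg Prod.snd h)) hfin
    have : {n : ℕ | {m : ℕ | (n, m) ∈ f '' X}.Infinite} = ∅ := by
      ext j
      simp only [Set.mem_setOf_eq, Set.mem_empty_iff_false, iff_false]
      exact fun h => h (hcol j)
    show {n : ℕ | {m : ℕ | (n, m) ∈ f '' X}.Infinite}.Finite
    rw [this]; exact Set.finite_empty
  exact WT.mono (Set.subset_preimage_image f X) (hf _ hT)
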